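/- Let Ψ > 0 and let Φ, β, c₀ be real numbers with c₀ > 0. Then ∫_{−c₀}^{c₀} √(Ψ² + β² + (t − Φ)²)/(Ψ² + (t − Φ)²) dt = arcsinh((c₀ − Φ)/√(Ψ² + β²)) + arcsinh((c₀ + Φ)/√(Ψ² + β²)) + (β/Ψ)·[ arctan((c₀ − Φ)·β/(Ψ·√(Ψ² + (c₀ − Φ)² + β²))) + arctan((c₀ + Φ)·β/(Ψ·√(Ψ² + (c₀ + Φ)² + β²))) ]. -/

import Mathlib

open Real

lemma key_deriv (Ψ β : ℝ) (hΨ : 0 < Ψ) (x : ℝ) :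
    HasDerivAt (fun y => Real.arsinh (y / Real.sqrt (Ψ^2+β^2))
        + (β/Ψ) * Real.arctan (y*β/(Ψ*Real.sqrt (Ψ^2+y^2+β^2))))
      (Real.sqrt (Ψ^2+β^2+x^2)/(Ψ^2+x^2)) x := by
  have hApos : (0:ℝ) < Ψ^2+β^2 := by positivity
  set A := Real.sqrt (Ψ^2+β^2) with hAdef
  have hA : 0 < A := Real.sqrt_pos.2 hApos
  have hA2 : A^2 = Ψ^2+β^2 := Real.sq_sqrt hApos.le
  have hSpos : (0:ℝ) < Ψ^2+x^2+β^2 := by positivity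
  set S := Real.sqrt (Ψ^2+x^2+β^2) with hSdef
  have hS : 0 < S := Real.sqrt_pos.2 hSpos
  have hS2 : S^2 = Ψ^2+x^2+β^2 := Real.sq_sqrt hSpos.le
  have hinner : HasDerivAt (fun y : ℝ => Ψ^2+y^2+β^2) (2*x) x := by
    simpa using (((hasDerivAt_pow 2 x).const_add (Ψ^2)).add_const (β^2))
  have hSd : HasDerivAt (fun y => Real.sqrt (Ψ^2+y^2+β^2)) (1/(2*S) * (2*x)) x :=
    (Real.hasDerivAt_sqrt hSpos.ne').comp x hinner
  have hDd : HasDerivAt (fun y => Ψ * Real.sqrt (Ψ^2+y^2+β^2)) (Ψ * (1/(2*S) * (2*x))) x :=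
    hSd.const_mul Ψ
  have hNd : HasDerivAt (fun y : ℝ => y*β) (1*β) x := (hasDerivAt_id x).mul_const β
  have hDne : Ψ * S ≠ 0 := by positivity
  have hUd : HasDerivAt (fun y => y*β/(Ψ*Real.sqrt (Ψ^2+y^2+β^2)))
      ((1*β*(Ψ*S) - x*β*(Ψ*(1/(2*S)*(2*x))))/(Ψ*S)^2) x := hNd.div hDd hDne
  have hatan : HasDerivAt (fun y => Real.arctan (y*β/(Ψ*Real.sqrt (Ψ^2+y^2+β^2))))
      ((1/(1+(x*β/(Ψ*S))^2)) * ((1*β*(Ψ*S) - x*β*(Ψ*(1/(2*S)*(2*x))))/(Ψ*S)^2)) x :=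
    (Real.hasDerivAt_arctan _).comp x hUd
  have harsinh : HasDerivAt (fun y => Real.arsinh (y / A))
      ((Real.sqrt (1+(x/A)^2))⁻¹ * (1/A)) x :=
    (Real.hasDerivAt_arsinh _).comp x ((hasDerivAt_id x).div_const A)
  have hsq1 : Real.sqrt (1+(x/A)^2) = S/A := by
    rw [show 1+(x/A)^2 = (S/A)^2 by
      field_simp
      linear_combination hA2 - hS2]
    exact Real.sqrt_sq (by positivity)
  have hsum := harsinh.add ((hatan).const_mul (β/Ψ))
  have e2 : 1 + (x*β/(Ψ*S))^2 = A^2*(Ψ^2+x^2)/(Ψ^2*S^2) := by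
    field_simp
    linear_combination Ψ^2*hS2 - (Ψ^2+x^2)*hA2
  have e3 : (1*β*(Ψ*S) - x*β*(Ψ*(1/(2*S)*(2*x))))/(Ψ*S)^2 = β*A^2/(Ψ*S^3) := by
    field_simp
    linear_combination β*hS2 - β*hA2
  have e4 : 1/(1+(x*β/(Ψ*S))^2) * ((1*β*(Ψ*S) - x*β*(Ψ*(1/(2*S)*(2*x))))/(Ψ*S)^2)
      = β*Ψ/(S*(Ψ^2+x^2)) := by
    rw [e2, e3]
    have h2 : Ψ^2+x^2 ≠ 0 := by positivity
    field_simp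
  refine hsum.congr_deriv (Eq.symm ?_)
  rw [hsq1, e4, show Ψ^2+β^2+x^2 = Ψ^2+x^2+β^2 from by ring, ← hSdef]
  have h2 : Ψ^2+x^2 ≠ 0 := by positivity
  field_simp
  linear_combination hS2

theorem stmt_8 (Ψ Φ β c₀ : ℝ) (hΨ : 0 < Ψ) (hc₀ : 0 < c₀) :
    (∫ t in (-c₀)..c₀,
        Real.sqrt (Ψ ^ 2 + β ^ 2 + (t - Φ) ^ 2) / (Ψ ^ 2 + (t - Φ) ^ 2))
      = Real.arsinh ((c₀ - Φ) / Real.sqrt (Ψ ^ 2 + β ^ 2))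
        + Real.arsinh ((c₀ + Φ) / Real.sqrt (Ψ ^ 2 + β ^ 2))
        + (β / Ψ) *
          (Real.arctan ((c₀ - Φ) * β / (Ψ * Real.sqrt (Ψ ^ 2 + (c₀ - Φ) ^ 2 + β ^ 2)))
            + Real.arctan ((c₀ + Φ) * β / (Ψ * Real.sqrt (Ψ ^ 2 + (c₀ + Φ) ^ 2 + β ^ 2)))) := by
  have hshift : (∫ t in (-c₀)..c₀,
        Real.sqrt (Ψ ^ 2 + β ^ 2 + (t - Φ) ^ 2) / (Ψ ^ 2 + (t - Φ) ^ 2))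
      = ∫ t in (-c₀ - Φ)..(c₀ - Φ),
          Real.sqrt (Ψ ^ 2 + β ^ 2 + t ^ 2) / (Ψ ^ 2 + t ^ 2) := by
    simpa using intervalIntegral.integral_comp_sub_right
      (fun t => Real.sqrt (Ψ ^ 2 + β ^ 2 + t ^ 2) / (Ψ ^ 2 + t ^ 2)) Φ
  have hcont : Continuous fun t : ℝ => Real.sqrt (Ψ ^ 2 + β ^ 2 + t ^ 2) / (Ψ ^ 2 + t ^ 2) := by
    apply Continuous.div (by fun_prop) (by fun_prop)
    intro t; positivity
  rw [hshift, intervalIntegral.integral_eq_sub_of_hasDerivAt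
      (f := fun y => Real.arsinh (y / Real.sqrt (Ψ^2+β^2))
        + (β/Ψ) * Real.arctan (y*β/(Ψ*Real.sqrt (Ψ^2+y^2+β^2))))
      (fun t _ => key_deriv Ψ β hΨ t) (hcont.intervalIntegrable _ _)]
  rw [show (-c₀ - Φ) = -(c₀ + Φ) from by ring]
  simp only [neg_sq, neg_mul, neg_div, Real.arsinh_neg, Real.arctan_neg]
  ring
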